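/- Let h ∈ ℂ^{N_b×N_b} be Hermitian, Δ ∈ ℂ^{N_b×N_b} be antisymmetric, 𝓗 = [[h, Δ], [−Δ̄, −h̄]], and β ∈ ℝ. Then the matrix I + exp(β𝓗) is invertible, and R := (I + exp(β𝓗))⁻¹ has the block form R = [[ρ, κ], [−κ̄, I − ρ̄]] for some ρ, κ ∈ ℂ^{N_b×N_b} with ρ Hermitian (ρ† = ρ) and κ antisymmetric (κᵀ = −κ). -/

import Mathlib

open Matrix
open scoped ComplexOrder

private lemma mapc_mapc {m p : Type*} (M : Matrix m p ℂ) :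
    (M.map (starRingEnd ℂ)).map (starRingEnd ℂ) = M := by
  ext i j; simp

private lemma mapc_eq {m p : Type*} (M : Matrix m p ℂ) :
    M.map (starRingEnd ℂ) = Mᴴᵀ := by
  ext i j; simp [Matrix.conjTranspose_apply]

private lemma mapc_inv {m : Type*} [Fintype m] [DecidableEq m] (M : Matrix m m ℂ) :
    (M⁻¹).map (starRingEnd ℂ) = (M.map (starRingEnd ℂ))⁻¹ := by
  rw [mapc_eq, mapc_eq, Matrix.conjTranspose_nonsing_inv, Matrix.transpose_nonsing_inv]

private lemma mapc_exp {m : Type*} [Fintype m] [DecidableEq m] (M : Matrix m m ℂ) :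
    (NormedSpace.exp M).map (starRingEnd ℂ) =
      NormedSpace.exp (M.map (starRingEnd ℂ)) := by
  rw [mapc_eq, mapc_eq, ← Matrix.exp_conjTranspose, ← Matrix.exp_transpose]

private lemma posdef_one_add_exp {m : Type*} [Fintype m] [DecidableEq m]
    (M : Matrix m m ℂ) (hM : Mᴴ = M) :
    ((1 : Matrix m m ℂ) + NormedSpace.exp M).PosDef := by
  set B := ((1:ℂ)/2) • M with hBdef
  have h2 : B + B = M := by rw [hBdef, ← add_smul]; norm_num
  have hB : (NormedSpace.exp B)ᴴ = NormedSpace.exp B := by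
    rw [← Matrix.exp_conjTranspose]
    congr 1
    rw [hBdef, Matrix.conjTranspose_smul, hM]
    norm_num
  have hEsplit : NormedSpace.exp M = (NormedSpace.exp B)ᴴ * NormedSpace.exp B := by
    rw [hB, ← Matrix.exp_add_of_commute B B (Commute.refl B), h2]
  exact Matrix.PosDef.add_posSemidef Matrix.PosDef.one
    (hEsplit ▸ Matrix.posSemidef_conjTranspose_mul_self (NormedSpace.exp B))

theorem finite_temperature_density_matrix_block_structure
    (Nb : ℕ)
    (h Δ : Matrix (Fin Nb) (Fin Nb) ℂ)
    (hh : hᴴ = h) (hΔ : Δᵀ = -Δ) (β : ℝ) :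
    IsUnit (1 + NormedSpace.exp ((β : ℂ) •
      Matrix.fromBlocks h Δ (-(Δ.map (starRingEnd ℂ)))
        (-(h.map (starRingEnd ℂ))))) ∧
    ∃ ρ κ : Matrix (Fin Nb) (Fin Nb) ℂ,
      ρᴴ = ρ ∧ κᵀ = -κ ∧
      (1 + NormedSpace.exp ((β : ℂ) •
          Matrix.fromBlocks h Δ (-(Δ.map (starRingEnd ℂ)))
            (-(h.map (starRingEnd ℂ)))))⁻¹ =
        Matrix.fromBlocks ρ κ (-(κ.map (starRingEnd ℂ)))
          (1 - ρ.map (starRingEnd ℂ)) := by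
  have hh' : ∀ i j, (starRingEnd ℂ) (h j i) = h i j := fun i j => by
    have := congrFun (congrFun hh i) j
    simpa [Matrix.conjTranspose_apply] using this
  have hΔ' : ∀ i j, Δ j i = -Δ i j := fun i j => by
    have := congrFun (congrFun hΔ i) j
    simpa using this
  set H := Matrix.fromBlocks h Δ (-(Δ.map (starRingEnd ℂ)))
    (-(h.map (starRingEnd ℂ))) with hH
  set A := (β : ℂ) • H with hA
  set E := NormedSpace.exp A with hE
  -- Hermiticity of H
  have eΔH : Δᴴ = -(Δ.map (starRingEnd ℂ)) := by
    ext i j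
    simp [Matrix.conjTranspose_apply, hΔ' i j]
  have eΔmapH : (-(Δ.map (starRingEnd ℂ)))ᴴ = Δ := by
    ext i j
    simp [Matrix.conjTranspose_apply, hΔ' i j]
  have ehmapH : (-(h.map (starRingEnd ℂ)))ᴴ = -(h.map (starRingEnd ℂ)) := by
    ext i j
    simp [Matrix.conjTranspose_apply, hh' j i]
  have hHherm : Hᴴ = H := by
    rw [hH, Matrix.fromBlocks_conjTranspose, hh, eΔH, eΔmapH, ehmapH]
  have hAherm : Aᴴ = A := by
    rw [hA, Matrix.conjTranspose_smul, hHherm]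
    congr 1
    simp [Complex.star_def, Complex.conj_ofReal]
  -- invertibility
  have hSpd := posdef_one_add_exp A hAherm
  have hSU : IsUnit (1 + E) := hSpd.isUnit
  refine ⟨hSU, ?_⟩
  set S := 1 + E with hS
  have hSdet : IsUnit S.det := (Matrix.isUnit_iff_isUnit_det S).1 hSU
  have hEdet : IsUnit E.det := (Matrix.isUnit_iff_isUnit_det E).1 (Matrix.isUnit_exp A)
  set J : Matrix (Fin Nb ⊕ Fin Nb) (Fin Nb ⊕ Fin Nb) ℂ := Matrix.fromBlocks 0 1 1 0 with hJ
  have hJJ : J * J = 1 := by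
    rw [hJ, Matrix.fromBlocks_multiply]
    simp [Matrix.fromBlocks_one]
  have hJU : IsUnit J := ⟨⟨J, J, hJJ, hJJ⟩, rfl⟩
  have hJinv : J⁻¹ = J := Matrix.inv_eq_left_inv hJJ
  have swap : ∀ (a b cc d : Matrix (Fin Nb) (Fin Nb) ℂ),
      J * Matrix.fromBlocks a b cc d * J = Matrix.fromBlocks d cc b a := by
    intro a b cc d
    rw [hJ, Matrix.fromBlocks_multiply, Matrix.fromBlocks_multiply]
    simp
  have hcH : H.map (starRingEnd ℂ) =
      Matrix.fromBlocks (h.map (starRingEnd ℂ)) (Δ.map (starRingEnd ℂ)) (-Δ) (-h) := by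
    rw [hH]
    ext (i | i) (j | j) <;> simp
  have hJHJ : J * (H.map (starRingEnd ℂ)) * J = -H := by
    rw [hcH, swap, hH]
    ext (i | i) (j | j) <;> simp
  have hJAJ : J * (A.map (starRingEnd ℂ)) * J = -A := by
    have hAc : A.map (starRingEnd ℂ) = (β : ℂ) • H.map (starRingEnd ℂ) := by
      rw [hA]
      ext i j
      simp [Matrix.map_apply, Complex.conj_ofReal]
    rw [hAc, Matrix.mul_smul, Matrix.smul_mul, hJHJ, hA, smul_neg]
  have hJEJ : J * (E.map (starRingEnd ℂ)) * J = E⁻¹ := by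
    have hc := Matrix.exp_conj J (A.map (starRingEnd ℂ)) hJU
    rw [hJinv, hJAJ, Matrix.exp_neg] at hc
    rw [hE, mapc_exp]
    exact hc.symm
  have hEherm : Eᴴ = E := by rw [hE, ← Matrix.exp_conjTranspose, hAherm]
  set R := S⁻¹ with hR
  have hSinv_mul : S⁻¹ * S = 1 := Matrix.nonsing_inv_mul S hSdet
  have hmul_Einv : E * E⁻¹ = 1 := Matrix.mul_nonsing_inv E hEdet
  have h1 : S⁻¹ + S⁻¹ * E = 1 := by
    have := hSinv_mul
    rwa [hS, mul_add, mul_one, ← hS] at this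
  have hkey1 : S⁻¹ * E = 1 - S⁻¹ := by
    rw [eq_sub_iff_add_eq, add_comm]; exact h1
  set T := 1 + E⁻¹ with hT
  have hTeq : (S⁻¹ * E) * T = 1 := by
    rw [hT, mul_add, mul_one, mul_assoc, hmul_Einv, mul_one, add_comm]
    exact h1
  have hTinv : T⁻¹ = S⁻¹ * E := Matrix.inv_eq_left_inv hTeq
  have hTdet : IsUnit T.det := by
    have hd := congrArg Matrix.det hTeq
    rw [Matrix.det_mul, Matrix.det_one] at hd
    exact IsUnit.of_mul_eq_one _ (by rw [mul_comm]; exact hd)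
  have hTT : T⁻¹ * T = 1 := Matrix.nonsing_inv_mul T hTdet
  have hJEinvJ : J * E⁻¹ * J = E.map (starRingEnd ℂ) := by
    calc J * E⁻¹ * J = J * (J * E.map (starRingEnd ℂ) * J) * J := by rw [hJEJ]
      _ = (J * J) * E.map (starRingEnd ℂ) * (J * J) := by noncomm_ring
      _ = E.map (starRingEnd ℂ) := by rw [hJJ, one_mul, mul_one]
  have hF : J * T * J = 1 + E.map (starRingEnd ℂ) := by
    calc J * T * J = J * 1 * J + J * E⁻¹ * J := by rw [hT]; noncomm_ring
      _ = 1 + E.map (starRingEnd ℂ) := by rw [mul_one, hJJ, hJEinvJ]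
  have hinvF : (1 + E.map (starRingEnd ℂ))⁻¹ = J * T⁻¹ * J := by
    apply Matrix.inv_eq_left_inv
    rw [← hF]
    calc (J * T⁻¹ * J) * (J * T * J) = J * (T⁻¹ * (J * J) * T) * J := by noncomm_ring
      _ = 1 := by rw [hJJ, mul_one, hTT, mul_one, hJJ]
  have hScmap : S.map (starRingEnd ℂ) = 1 + E.map (starRingEnd ℂ) := by
    rw [hS]
    ext i j
    simp [Matrix.map_apply, Matrix.add_apply, Matrix.one_apply, apply_ite (starRingEnd ℂ)]
  have hRc : R.map (starRingEnd ℂ) = (1 + E.map (starRingEnd ℂ))⁻¹ := by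
    rw [hR, mapc_inv, hScmap]
  have hkey : J * R.map (starRingEnd ℂ) * J = 1 - R := by
    rw [hRc, hinvF, hTinv]
    calc J * (J * (S⁻¹ * E) * J) * J = (J * J) * (S⁻¹ * E) * (J * J) := by noncomm_ring
      _ = 1 - R := by rw [hJJ, one_mul, mul_one, hkey1, hR]
  have hRherm : Rᴴ = R := by
    rw [hR, Matrix.conjTranspose_nonsing_inv]
    congr 1
    rw [hS, Matrix.conjTranspose_add, Matrix.conjTranspose_one, hEherm]
  obtain ⟨ρ, κ, l, m, hRb⟩ : ∃ ρ κ l m, R = Matrix.fromBlocks ρ κ l m :=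
    ⟨_, _, _, _, (Matrix.fromBlocks_toBlocks R).symm⟩
  have e1 := hRherm
  rw [hRb, Matrix.fromBlocks_conjTranspose] at e1
  have hρ : ρᴴ = ρ := by
    have := congrArg Matrix.toBlocks₁₁ e1
    simpa [Matrix.toBlocks_fromBlocks₁₁] using this
  have hlκ : lᴴ = κ := by
    have := congrArg Matrix.toBlocks₁₂ e1
    simpa [Matrix.toBlocks_fromBlocks₁₂] using this
  have e2 := hkey
  rw [hRb, Matrix.fromBlocks_map, swap] at e2
  have e2' : Matrix.fromBlocks (m.map (starRingEnd ℂ)) (l.map (starRingEnd ℂ))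
      (κ.map (starRingEnd ℂ)) (ρ.map (starRingEnd ℂ)) =
      Matrix.fromBlocks (1 - ρ) (-κ) (-l) (1 - m) := by
    rw [e2]
    ext (i | i) (j | j) <;> simp [Matrix.one_apply]
  have h11 : m.map (starRingEnd ℂ) = 1 - ρ := by
    have := congrArg Matrix.toBlocks₁₁ e2'
    simpa [Matrix.toBlocks_fromBlocks₁₁] using this
  have h12 : l.map (starRingEnd ℂ) = -κ := by
    have := congrArg Matrix.toBlocks₁₂ e2'
    simpa [Matrix.toBlocks_fromBlocks₁₂] using this
  have h21 : κ.map (starRingEnd ℂ) = -l := by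
    have := congrArg Matrix.toBlocks₂₁ e2'
    simpa [Matrix.toBlocks_fromBlocks₂₁] using this
  have hκl : κᴴ = l := by rw [← hlκ, Matrix.conjTranspose_conjTranspose]
  have hκT : κᵀ = -κ := by
    have hT' : κᵀ = l.map (starRingEnd ℂ) := by
      rw [← hκl]
      ext i j
      simp [Matrix.conjTranspose_apply]
    rw [hT', h12]
  have hl : l = -(κ.map (starRingEnd ℂ)) := by rw [h21, neg_neg]
  have hm : m = 1 - ρ.map (starRingEnd ℂ) := by
    have := congrArg (fun M => M.map (starRingEnd ℂ)) h11
    simp only [mapc_mapc] at this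
    rw [this]
    ext i j
    simp [Matrix.map_apply, Matrix.sub_apply, Matrix.one_apply, apply_ite (starRingEnd ℂ)]
  exact ⟨ρ, κ, hρ, hκT, by rw [hRb, hl, hm]⟩
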